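/- Let p ∈ (1/2,1) and a_n = Γ(n+p)/(Γ(n)Γ(p+1)). Then the series ∑_{n≥1} 1/a_n² converges, and moreover ∑_{k=n}^∞ 1/a_k² ∼ Γ(p+1)²·n^{1-2p}/(2p-1) as n → ∞. -/

import Mathlib

open Filter Real

lemma gamma_prod (p : ℝ) (hp : 0 < p) (m : ℕ) :
    Real.Gamma (m + p) = Real.Gamma p * ∏ j ∈ Finset.range m, (p + j) := by
  induction m with
  | zero => simp
  | succ k ih =>
    have h1 : ((k + 1 : ℕ) : ℝ) + p = (k + p) + 1 := by push_cast; ring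
    rw [h1, Real.Gamma_add_one (by positivity), Finset.prod_range_succ, ih]
    ring

lemma gamma_ratio_tendsto (p : ℝ) (hp : 0 < p) :
    Tendsto (fun n : ℕ => Real.Gamma (n + p) / (Real.Gamma n * (n : ℝ) ^ p)) atTop (nhds 1) := by
  have hΓp : 0 < Real.Gamma p := Real.Gamma_pos_of_pos hp
  have key : Tendsto (fun m : ℕ =>
      Real.Gamma p / Real.GammaSeq p m * ((m : ℝ) / ((m : ℝ) + 1)) ^ p) atTop (nhds 1) := by
    have h1 : Tendsto (fun m : ℕ => Real.Gamma p / Real.GammaSeq p m) atTop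
        (nhds (Real.Gamma p / Real.Gamma p)) :=
      tendsto_const_nhds.div (Real.GammaSeq_tendsto_Gamma p) hΓp.ne'
    rw [div_self hΓp.ne'] at h1
    have h2 : Tendsto (fun m : ℕ => ((m : ℝ) / ((m : ℝ) + 1)) ^ p) atTop (nhds 1) := by
      have : Tendsto (fun m : ℕ => (m : ℝ) / ((m : ℝ) + 1)) atTop (nhds 1) :=
        tendsto_natCast_div_add_atTop (1 : ℝ)
      have hc : ContinuousAt (fun x : ℝ => x ^ p) 1 :=
        Real.continuousAt_rpow_const 1 p (Or.inl one_ne_zero)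
      simpa [Function.comp_def] using hc.tendsto.comp this
    simpa using h1.mul h2
  rw [← Filter.tendsto_add_atTop_iff_nat 1]
  refine key.congr' ?_
  filter_upwards [eventually_ge_atTop 1] with m hm
  have hm0 : (0:ℝ) < m := by exact_mod_cast hm
  have hprod : (0:ℝ) < ∏ j ∈ Finset.range (m + 1), (p + j) := by
    apply Finset.prod_pos; intro j _; positivity
  have hfac : (0:ℝ) < (Nat.factorial m : ℝ) := by exact_mod_cast m.factorial_pos
  have hmp : (0:ℝ) < (m : ℝ) ^ p := Real.rpow_pos_of_pos hm0 p
  have hm1p : (0:ℝ) < ((m : ℝ) + 1) ^ p := Real.rpow_pos_of_pos (by linarith) p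
  have hGn : Real.Gamma ((m + 1 : ℕ) : ℝ) = (Nat.factorial m : ℝ) := by
    push_cast; exact Real.Gamma_nat_eq_factorial m
  have hGnum : Real.Gamma (((m + 1 : ℕ) : ℝ) + p)
      = Real.Gamma p * ∏ j ∈ Finset.range (m + 1), (p + j) := gamma_prod p hp (m + 1)
  have hcast : (((m + 1 : ℕ) : ℝ)) = (m : ℝ) + 1 := by push_cast; ring
  rw [Real.GammaSeq, hGnum, hGn, hcast, Real.div_rpow hm0.le (by linarith : (0:ℝ) ≤ (m:ℝ)+1)]
  field_simp

lemma slope_bounds (q : ℝ) (hq : 1 < q) (x : ℝ) (hx : 1 ≤ x) :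
    ((x + 1) ^ q)⁻¹ ≤ x ^ (1-q) / (q-1) - (x+1) ^ (1-q) / (q-1) ∧
    x ^ (1-q) / (q-1) - (x+1) ^ (1-q) / (q-1) ≤ (x ^ q)⁻¹ := by
  have hx0 : (0:ℝ) < x := by linarith
  obtain ⟨c, hc, hder⟩ := exists_hasDerivAt_eq_slope (fun y : ℝ => y ^ (1-q))
      (fun y => (1-q) * y ^ (-q)) (by linarith : x < x + 1)
      (fun y hy => by
        have hy0 : y ≠ 0 := by
          rcases Set.mem_Icc.mp hy with ⟨h1, _⟩; intro h; rw [h] at h1; linarith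
        exact ((Real.continuousAt_rpow_const y (1-q) (Or.inl hy0)).continuousWithinAt))
      (fun y hy => by
        have hy0 : y ≠ 0 := by
          rcases Set.mem_Ioo.mp hy with ⟨h1, _⟩; intro h; rw [h] at h1; linarith
        have := Real.hasDerivAt_rpow_const (x := y) (p := 1-q) (Or.inl hy0)
        simpa [sub_sub, show (1-q)-1 = -q by ring] using this)
  rcases Set.mem_Ioo.mp hc with ⟨hc1, hc2⟩
  have hc0 : 0 < c := by linarith
  have key : x ^ (1-q) / (q-1) - (x+1) ^ (1-q) / (q-1) = (c ^ q)⁻¹ := by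
    have h1 : (1-q) * c ^ (-q) = ((x+1) ^ (1-q) - x ^ (1-q)) / (x + 1 - x) := hder
    rw [show x + 1 - x = 1 by ring, div_one] at h1
    rw [← Real.rpow_neg hc0.le]
    have hq1 : q - 1 ≠ 0 := by linarith
    field_simp
    nlinarith [h1]
  rw [key]
  constructor
  · exact inv_anti₀ (Real.rpow_pos_of_pos hc0 q) (Real.rpow_le_rpow hc0.le hc2.le (by linarith))
  · exact inv_anti₀ (Real.rpow_pos_of_pos hx0 q) (Real.rpow_le_rpow hx0.le hc1.le (by linarith))

lemma telescope_sum (q : ℝ) (hq : 1 < q) (j : ℕ) (hj : 1 ≤ j) :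
    HasSum (fun k : ℕ => ((j+k : ℕ):ℝ) ^ (1-q) / (q-1) - ((j+k+1 : ℕ):ℝ) ^ (1-q) / (q-1))
      ((j:ℝ) ^ (1-q) / (q-1)) := by
  have hnonneg : ∀ k : ℕ, 0 ≤ ((j+k : ℕ):ℝ) ^ (1-q) / (q-1) - ((j+k+1 : ℕ):ℝ) ^ (1-q) / (q-1) := by
    intro k
    have hjk : (1:ℝ) ≤ ((j+k : ℕ):ℝ) := by exact_mod_cast Nat.le_add_right_of_le hj
    have h := (slope_bounds q hq ((j+k : ℕ):ℝ) hjk).1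
    have hpos : (0:ℝ) < ((((j+k:ℕ):ℝ)+1) ^ q)⁻¹ := by
      have : (0:ℝ) < (((j+k:ℕ):ℝ)+1) ^ q := Real.rpow_pos_of_pos (by linarith) q
      positivity
    have hcast : ((j+k+1 : ℕ):ℝ) = ((j+k : ℕ):ℝ) + 1 := by push_cast; ring
    rw [hcast]; linarith
  rw [hasSum_iff_tendsto_nat_of_nonneg hnonneg]
  have hps : ∀ K : ℕ, (∑ i ∈ Finset.range K,
      (((j+i : ℕ):ℝ) ^ (1-q) / (q-1) - ((j+i+1 : ℕ):ℝ) ^ (1-q) / (q-1)))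
      = (j:ℝ) ^ (1-q) / (q-1) - ((j+K : ℕ):ℝ) ^ (1-q) / (q-1) := by
    intro K
    have := Finset.sum_range_sub' (fun i => ((j+i : ℕ):ℝ) ^ (1-q) / (q-1)) K
    simpa [add_assoc] using this
  have h1 : Tendsto (fun K : ℕ => ((j+K:ℕ):ℝ)) atTop atTop :=
    tendsto_natCast_atTop_atTop.comp
      (tendsto_atTop_mono (fun K => Nat.le_add_left K j) tendsto_id)
  have h2 : Tendsto (fun x : ℝ => x ^ (-(q-1))) atTop (nhds 0) :=
    tendsto_rpow_neg_atTop (by linarith)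
  have h3 := (h2.comp h1).div_const (q-1)
  rw [zero_div] at h3
  have h0 : Tendsto (fun K : ℕ => ((j+K : ℕ):ℝ) ^ (1-q) / (q-1)) atTop (nhds 0) := by
    refine h3.congr (fun K => ?_)
    rw [Function.comp_apply, show -(q-1) = 1-q by ring]
  have h4 := (tendsto_const_nhds (x := (j:ℝ) ^ (1-q) / (q-1)) (f := atTop)).sub h0
  rw [sub_zero] at h4
  exact Tendsto.congr (fun K => (hps K).symm) h4

lemma tail_lb (q : ℝ) (hq : 1 < q) (n : ℕ) (hn : 1 ≤ n) :
    (n:ℝ) ^ (1-q) / (q-1) ≤ (∑' k : ℕ, (((n+k : ℕ):ℝ) ^ q)⁻¹) := by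
  have hG : Summable (fun m : ℕ => ((m:ℝ) ^ q)⁻¹) := Real.summable_nat_rpow_inv.mpr hq
  have hGn : Summable (fun k : ℕ => (((n+k : ℕ):ℝ) ^ q)⁻¹) :=
    ((summable_nat_add_iff n).mpr hG).congr (fun k => by rw [add_comm])
  have hTn := telescope_sum q hq n hn
  refine hTn.tsum_eq ▸ Summable.tsum_le_tsum ?_ hTn.summable hGn
  intro k
  have hjk : (1:ℝ) ≤ ((n+k : ℕ):ℝ) := by exact_mod_cast Nat.le_add_right_of_le hn
  have h := (slope_bounds q hq ((n+k : ℕ):ℝ) hjk).2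
  have hcast : ((n+k+1 : ℕ):ℝ) = ((n+k : ℕ):ℝ) + 1 := by push_cast; ring
  rw [hcast]; linarith

lemma tail_ub (q : ℝ) (hq : 1 < q) (n : ℕ) (hn : 1 ≤ n) :
    (∑' k : ℕ, (((n+k : ℕ):ℝ) ^ q)⁻¹) ≤ ((n:ℝ) ^ q)⁻¹ + (n:ℝ) ^ (1-q) / (q-1) := by
  have hG : Summable (fun m : ℕ => ((m:ℝ) ^ q)⁻¹) := Real.summable_nat_rpow_inv.mpr hq
  have hGn : Summable (fun k : ℕ => (((n+k : ℕ):ℝ) ^ q)⁻¹) :=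
    ((summable_nat_add_iff n).mpr hG).congr (fun k => by rw [add_comm])
  have hTn := telescope_sum q hq n hn
  rw [Summable.tsum_eq_zero_add hGn]
  have h1 : (∑' k : ℕ, (((n+(k+1) : ℕ):ℝ) ^ q)⁻¹) ≤ (n:ℝ) ^ (1-q) / (q-1) := by
    refine hTn.tsum_eq ▸ Summable.tsum_le_tsum ?_ ?_ hTn.summable
    · intro k
      have hjk : (1:ℝ) ≤ ((n+k : ℕ):ℝ) := by exact_mod_cast Nat.le_add_right_of_le hn
      have h := (slope_bounds q hq ((n+k : ℕ):ℝ) hjk).1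
      push_cast at h ⊢; ring_nf at h ⊢; linarith
    · have hGn1 : Summable (fun k : ℕ => (((n+1+k : ℕ):ℝ) ^ q)⁻¹) :=
        ((summable_nat_add_iff (n+1)).mpr hG).congr (fun k => by rw [add_comm])
      exact hGn1.congr (fun k => by rw [show n+1+k = n+(k+1) from by omega])
  simp only [add_zero]
  linarith
set_option maxHeartbeats 2000000 in
theorem stmt2 (p : ℝ) (hp : p ∈ Set.Ioo (1/2 : ℝ) 1) (a : ℕ → ℝ)
    (ha : ∀ n : ℕ, 1 ≤ n → a n = Real.Gamma (n + p) / (Real.Gamma n * Real.Gamma (p + 1))) :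
    Summable (fun n : ℕ => 1 / (a (n + 1)) ^ 2) ∧
    Tendsto (fun n : ℕ =>
        (∑' k : ℕ, 1 / (a (n + k)) ^ 2) * (2 * p - 1) /
          (Real.Gamma (p + 1) ^ 2 * (n : ℝ) ^ (1 - 2 * p)))
      atTop (nhds 1) := by
  obtain ⟨hp1, hp2⟩ := hp
  have hp0 : 0 < p := by linarith
  have hq : 1 < 2 * p := by linarith
  set C : ℝ := Real.Gamma (p + 1) ^ 2 with hCdef
  have hΓ : 0 < Real.Gamma (p + 1) := Real.Gamma_pos_of_pos (by linarith)
  have hC : 0 < C := by positivity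
  set F : ℕ → ℝ := fun m => 1 / (a m) ^ 2 with hFdef
  have hFnonneg : ∀ m, 0 ≤ F m := fun m => by positivity
  set G : ℕ → ℝ := fun m => ((m:ℝ) ^ (2*p))⁻¹ with hGdef
  have hG : Summable G := Real.summable_nat_rpow_inv.mpr hq
  have hGnonneg : ∀ m, 0 ≤ G m := fun m => by
    have : (0:ℝ) ≤ (m:ℝ) ^ (2*p) := Real.rpow_nonneg (Nat.cast_nonneg m) _
    positivity
  have hGshift : ∀ j : ℕ, Summable (fun k => G (j + k)) := fun j =>
    ((summable_nat_add_iff j).mpr hG).congr (fun k => by rw [add_comm])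
  -- Step 1: F m * m^(2p) → C
  have hL2 : Tendsto (fun m : ℕ => F m * (m:ℝ) ^ (2*p)) atTop (nhds C) := by
    have hr := gamma_ratio_tendsto p hp0
    have h1 : Tendsto (fun m : ℕ =>
        ((Real.Gamma (m + p) / (Real.Gamma m * (m:ℝ) ^ p))⁻¹) ^ 2 * C) atTop
        (nhds ((1⁻¹ : ℝ) ^ 2 * C)) := ((hr.inv₀ one_ne_zero).pow 2).mul_const _
    norm_num at h1
    refine h1.congr' ?_
    filter_upwards [eventually_ge_atTop 1] with m hm
    have hm0 : (0:ℝ) < m := by exact_mod_cast hm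
    have hGm : 0 < Real.Gamma (m:ℝ) := Real.Gamma_pos_of_pos hm0
    have hGmp : 0 < Real.Gamma ((m:ℝ) + p) := Real.Gamma_pos_of_pos (by linarith)
    have hmp : 0 < (m:ℝ) ^ p := Real.rpow_pos_of_pos hm0 p
    have hsq : (m:ℝ) ^ (2*p) = ((m:ℝ) ^ p) ^ 2 := by
      rw [show 2*p = p*2 by ring, Real.rpow_mul hm0.le, show ((2:ℝ)) = ((2:ℕ):ℝ) by norm_num,
        Real.rpow_natCast]
    simp only [hFdef, ha m hm, hsq]
    field_simp
    ring
  -- Step 2: eventual two-sided bounds on F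
  have hbound : ∀ ε : ℝ, 0 < ε → ∃ N : ℕ, 1 ≤ N ∧
      ∀ m : ℕ, N ≤ m → (1 - ε) * C * G m ≤ F m ∧ F m ≤ (1 + ε) * C * G m := by
    intro ε hε
    have h1 : ∀ᶠ m : ℕ in atTop, (1 - ε) * C < F m * (m:ℝ) ^ (2*p) := by
      apply hL2.eventually_const_lt; nlinarith
    have h2 : ∀ᶠ m : ℕ in atTop, F m * (m:ℝ) ^ (2*p) < (1 + ε) * C := by
      apply hL2.eventually_lt_const; nlinarith
    obtain ⟨N₀, hN₀⟩ := (h1.and h2).exists_forall_of_atTop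
    refine ⟨max N₀ 1, le_max_right _ _, fun m hm => ?_⟩
    have hm1 : 1 ≤ m := le_trans (le_max_right _ _) hm
    have hm0 : (0:ℝ) < m := by exact_mod_cast hm1
    have hmq : 0 < (m:ℝ) ^ (2*p) := Real.rpow_pos_of_pos hm0 _
    obtain ⟨hlo, hhi⟩ := hN₀ m (le_trans (le_max_left _ _) hm)
    have hFm : F m = (F m * (m:ℝ) ^ (2*p)) * G m := by
      simp only [hGdef]; field_simp
    constructor
    · rw [hFm]; exact mul_le_mul_of_nonneg_right hlo.le (hGnonneg m)
    · rw [hFm]; exact mul_le_mul_of_nonneg_right hhi.le (hGnonneg m)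
  -- Summability
  obtain ⟨N₁, hN₁ge, hN₁⟩ := hbound 1 one_pos
  have hFsum : Summable F := by
    refine (summable_nat_add_iff N₁).mp ?_
    refine Summable.of_nonneg_of_le (fun k => hFnonneg _) (fun k => (hN₁ (k + N₁) (Nat.le_add_left _ _)).2)
      ?_
    exact ((summable_nat_add_iff N₁).mpr (hG.mul_left ((1+1)*C)))
  have hsum1 : Summable (fun n : ℕ => 1 / (a (n + 1)) ^ 2) := (summable_nat_add_iff 1).mpr hFsum
  refine ⟨hsum1, ?_⟩
  -- tail sums
  set S : ℕ → ℝ := fun n => ∑' k : ℕ, G (n + k) with hSdef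
  set T : ℕ → ℝ := fun n => ∑' k : ℕ, F (n + k) with hTdef
  have hSpos : ∀ n : ℕ, 1 ≤ n → 0 < S n := by
    intro n hn
    have := tail_lb (2*p) hq n hn
    have h0 : (0:ℝ) < (n:ℝ) ^ (1-2*p) / (2*p-1) := by
      have : (0:ℝ) < (n:ℝ) ^ (1-2*p) :=
        Real.rpow_pos_of_pos (by exact_mod_cast hn : (0:ℝ) < n) _
      have h2 : (0:ℝ) < 2*p-1 := by linarith
      positivity
    simp only [hSdef, hGdef]
    linarith [this]
  have hTtail : ∀ n : ℕ, Summable (fun k => F (n + k)) :=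
    fun n => ((summable_nat_add_iff n).mpr hFsum).congr (fun k => by rw [add_comm])
  have hTbound : ∀ ε : ℝ, 0 < ε → ∀ᶠ n : ℕ in atTop,
      (1 - ε) * (C * S n) ≤ T n ∧ T n ≤ (1 + ε) * (C * S n) := by
    intro ε hε
    obtain ⟨N, hNge, hN⟩ := hbound ε hε
    filter_upwards [eventually_ge_atTop N] with n hn
    have hterm : ∀ k : ℕ, (1 - ε) * C * G (n + k) ≤ F (n + k) ∧
        F (n + k) ≤ (1 + ε) * C * G (n + k) := fun k => hN (n + k) (Nat.le_add_right_of_le hn)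
    constructor
    · calc (1 - ε) * (C * S n) = ∑' k : ℕ, (1 - ε) * C * G (n + k) := by
            simp only [hSdef]; rw [tsum_mul_left]; ring
          _ ≤ T n := Summable.tsum_le_tsum (fun k => (hterm k).1)
            ((hGshift n).mul_left _) (hTtail n)
    · calc T n ≤ ∑' k : ℕ, (1 + ε) * C * G (n + k) := Summable.tsum_le_tsum (fun k => (hterm k).2)
            (hTtail n) ((hGshift n).mul_left _)
          _ = (1 + ε) * (C * S n) := by
            simp only [hSdef]; rw [tsum_mul_left]; ring
  -- U n → 1
  set U : ℕ → ℝ := fun n => S n * (2*p - 1) / (n:ℝ) ^ (1 - 2*p) with hUdef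
  have hU : Tendsto U atTop (nhds 1) := by
    have hub : Tendsto (fun n : ℕ => 1 + (2*p - 1) * ((n:ℝ))⁻¹) atTop (nhds 1) := by
      have := (tendsto_inv_atTop_nhds_zero_nat (𝕜 := ℝ)).const_mul (2*p - 1)
      have h2 := (tendsto_const_nhds (x := (1:ℝ)) (f := atTop (α := ℕ))).add this
      simpa using h2
    refine tendsto_of_tendsto_of_tendsto_of_le_of_le' tendsto_const_nhds hub ?_ ?_
    · filter_upwards [eventually_ge_atTop 1] with n hn
      have hn0 : (0:ℝ) < n := by exact_mod_cast hn
      have hpow : (0:ℝ) < (n:ℝ) ^ (1-2*p) := Real.rpow_pos_of_pos hn0 _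
      have hlb := tail_lb (2*p) hq n hn
      have h2p : (2*p-1) ≠ 0 := by linarith
      simp only [hUdef]
      rw [le_div_iff₀ hpow]
      calc 1 * (n:ℝ) ^ (1-2*p) = ((n:ℝ) ^ (1-2*p) / (2*p-1)) * (2*p-1) := by
            rw [div_mul_cancel₀ _ h2p, one_mul]
        _ ≤ S n * (2*p-1) := by
            apply mul_le_mul_of_nonneg_right _ (by linarith)
            simpa [hSdef, hGdef] using hlb
    · filter_upwards [eventually_ge_atTop 1] with n hn
      have hn0 : (0:ℝ) < n := by exact_mod_cast hn
      have hpow : (0:ℝ) < (n:ℝ) ^ (1-2*p) := Real.rpow_pos_of_pos hn0 _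
      have hub2 := tail_ub (2*p) hq n hn
      have h2p : (2*p-1) ≠ 0 := by linarith
      simp only [hUdef]
      rw [div_le_iff₀ hpow]
      have hkey : ((n:ℝ) ^ (2*p))⁻¹ = ((n:ℝ))⁻¹ * (n:ℝ) ^ (1-2*p) := by
        rw [← Real.rpow_neg hn0.le, show -(2*p) = -1 + (1-2*p) by ring, Real.rpow_add hn0,
          Real.rpow_neg_one]
      have hS_le : S n ≤ ((n:ℝ) ^ (2*p))⁻¹ + (n:ℝ) ^ (1-2*p) / (2*p-1) := by
        simpa [hSdef, hGdef] using hub2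
      calc S n * (2*p-1) ≤ (((n:ℝ) ^ (2*p))⁻¹ + (n:ℝ) ^ (1-2*p) / (2*p-1)) * (2*p-1) :=
            mul_le_mul_of_nonneg_right hS_le (by linarith)
        _ = (1 + (2*p-1) * ((n:ℝ))⁻¹) * (n:ℝ) ^ (1-2*p) := by
            rw [hkey, add_mul, div_mul_cancel₀ _ h2p]; ring
  -- V n → 1
  have hV : Tendsto (fun n : ℕ => T n / (C * S n)) atTop (nhds 1) := by
    rw [Metric.tendsto_atTop]
    intro ε hε
    have hε2 : 0 < min (ε/2) (1/2) := by positivity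
    obtain ⟨N₂, hN₂⟩ := ((hTbound _ hε2).and (eventually_ge_atTop 1)).exists_forall_of_atTop
    refine ⟨N₂, fun n hn => ?_⟩
    obtain ⟨⟨hlo, hhi⟩, hn1⟩ := hN₂ n hn
    have hCS : 0 < C * S n := mul_pos hC (hSpos n hn1)
    rw [Real.dist_eq]
    have h1 : T n / (C * S n) - 1 ≤ min (ε/2) (1/2) := by
      rw [div_sub' hCS.ne', div_le_iff₀ hCS]
      nlinarith
    have h2 : -(min (ε/2) (1/2)) ≤ T n / (C * S n) - 1 := by
      rw [div_sub' hCS.ne', le_div_iff₀ hCS]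
      nlinarith
    have := abs_le.mpr ⟨h2, h1⟩
    calc |T n / (C * S n) - 1| ≤ min (ε/2) (1/2) := this
      _ ≤ ε/2 := min_le_left _ _
      _ < ε := by linarith
  -- combine
  have hfinal := hV.mul hU
  rw [mul_one] at hfinal
  refine hfinal.congr' ?_
  filter_upwards [eventually_ge_atTop 1] with n hn
  have hn0 : (0:ℝ) < n := by exact_mod_cast hn
  have hS := hSpos n hn
  have hpow : (0:ℝ) < (n:ℝ) ^ (1-2*p) := Real.rpow_pos_of_pos hn0 _
  simp only [hUdef, hTdef, hFdef]
  field_simp
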